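/- For any nontrivial knot K, the ascending number satisfies a(K) ≤ ⌊(c(K) − 1)/2⌋, where c(K) is the minimal crossing number of K and ⌊x⌋ denotes the greatest integer not exceeding x. -/

import Mathlib

noncomputable section

open Set Metric Real

/-- Euclidean 3-space, the ambient space for links. -/
abbrev R3 : Type := EuclideanSpace ℝ (Fin 3)

/-- The Euclidean plane, where link diagrams live. -/
abbrev R2 : Type := EuclideanSpace ℝ (Fin 2)

/-- Convenient constructor for points of `R3`. -/
def v3 (a b c : ℝ) : R3 := WithLp.toLp 2 ![a, b, c]

/-- Convenient constructor for points of `R2`. -/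
def v2 (a b : ℝ) : R2 := WithLp.toLp 2 ![a, b]

/-- The projection of `ℝ³` onto the plane of the diagram. -/
def pr (x : R3) : R2 := v2 (x 0) (x 1)

/-- The height function on `ℝ³` (the coordinate forgotten by `pr`). -/
def ht (x : R3) : ℝ := x 2

/-- The parametrizing circle `ℝ/ℤ`. -/
abbrev S1 : Type := AddCircle (1 : ℝ)

instance : Fact ((0 : ℝ) < 1) := ⟨one_pos⟩

/-- The time in `[0,1)` at which the point of parameter `t` is visited when
traversing a component from its basepoint (parameter `0`) in the direction
of its orientation. -/
def tOf (t : S1) : ℝ := (AddCircle.equivIco 1 0 t).1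

/-- A link with `n` ordered components: a (tame, i.e. polygonal up to
parametrization) topological embedding of `n` disjoint circles into `ℝ³`.
The component carrying a point `(i, t)` is `i` (this gives the ordering), the
orientation of each component is the one induced by the parametrization, and
the basepoint of each component is the point of parameter `0`.  (Working in
the piecewise linear category, every component is required to have polygonal
image.) -/
structure Link (n : ℕ) where
  emb : Fin n × S1 → R3
  continuous : Continuous emb
  injective : Function.Injective emb
  polygonal : ∀ i : Fin n, ∃ F : Finset (R3 × R3),
    (Set.range fun t : S1 => emb (i, t)) = ⋃ s ∈ F, segment ℝ s.1 s.2

/-- `Carries L A` : some ambient isotopy of `ℝ³` carries (the image of) `L`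
onto the set `A`. -/
def Carries {n : ℕ} (L : Link n) (A : Set R3) : Prop :=
  ∃ H : ℝ → (R3 ≃ₜ R3),
    Continuous (fun p : ℝ × R3 => H p.1 p.2) ∧
    H 0 = Homeomorph.refl R3 ∧
    (H 1) '' (Set.range L.emb) = A

/-- Two links are equivalent if an ambient isotopy carries one onto the other. -/
def LinkEquiv {n : ℕ} (L₁ L₂ : Link n) : Prop := Carries L₁ (Set.range L₂.emb)

/-- The set of double points (crossing points) of the projection of a link. -/
def doublePts {n : ℕ} (L : Link n) : Set R2 :=
  {x | ∃ u v : Fin n × S1, u ≠ v ∧ pr (L.emb u) = x ∧ pr (L.emb v) = x}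

/-- A (based ordered oriented) link diagram: a link in regular position with
respect to the projection `pr`; there are finitely many crossings, each
crossing is a transverse double point, and no basepoint lies over a
crossing. -/
structure Diagram (n : ℕ) extends Link n where
  finiteCrossings : (doublePts toLink).Finite
  doubleOnly : ∀ x ∈ doublePts toLink, ∃ u v : Fin n × S1, u ≠ v ∧
    pr (toLink.emb u) = x ∧ pr (toLink.emb v) = x ∧
    ∀ w : Fin n × S1, pr (toLink.emb w) = x → w = u ∨ w = v
  baseFree : ∀ i : Fin n, pr (toLink.emb (i, 0)) ∉ doublePts toLink

/-- `u` is encountered strictly before `v` when the components of a diagram are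
traversed in order, each from its basepoint in the direction of its
orientation. -/
def encBefore {n : ℕ} (u v : Fin n × S1) : Prop :=
  u.1 < v.1 ∨ (u.1 = v.1 ∧ tOf u.2 < tOf v.2)

/-- The crossing `x` of the diagram `D` is ascending: it is first encountered
as an under-crossing.  These are exactly the crossings at which `D` differs
from its descending diagram `d(D)`. -/
def AscendingAt {n : ℕ} (D : Diagram n) (x : R2) : Prop :=
  ∃ u v : Fin n × S1, pr (D.emb u) = x ∧ pr (D.emb v) = x ∧
    encBefore u v ∧ ht (D.emb u) < ht (D.emb v)

/-- A diagram is descending if every crossing is first encountered as an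
over-crossing; equivalently, it coincides with its descending diagram. -/
def IsDescending {n : ℕ} (D : Diagram n) : Prop :=
  ∀ x ∈ doublePts D.toLink, ¬ AscendingAt D x

/-- The ascending number `a(D̃)` of a diagram: the number of crossings at which
`D` differs from its descending diagram `d(D)`. -/
def diagAsc {n : ℕ} (D : Diagram n) : ℕ := {x : R2 | AscendingAt D x}.ncard

/-- The ascending number `a(L)` of a link: the minimum of `a(D̃)` over all
based ordered oriented diagrams of `L`. -/
def ascNum {n : ℕ} (L : Link n) : ℕ :=
  sInf {m : ℕ | ∃ D : Diagram n, LinkEquiv D.toLink L ∧ diagAsc D = m}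

/-- The minimal crossing number `c(L)` of a link. -/
def crossingNum {n : ℕ} (L : Link n) : ℕ :=
  sInf {m : ℕ | ∃ D : Diagram n, LinkEquiv D.toLink L ∧ (doublePts D.toLink).ncard = m}

/-- The closed unit disk in the plane. -/
def Disk2 : Set R2 := Metric.closedBall 0 1

/-- The unit circle, boundary of `Disk2`. -/
def Circ2 : Set R2 := Metric.sphere 0 1

/-- The components of `L` indexed by `S` form a trivial link: they bound
disjoint embedded disks. -/
def SubTrivial {n : ℕ} (L : Link n) (S : Set (Fin n)) : Prop :=
  ∃ F : Fin n × R2 → R3,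
    ContinuousOn F (S ×ˢ Disk2) ∧ Set.InjOn F (S ×ˢ Disk2) ∧
    ∀ i ∈ S, (Set.range fun t : S1 => L.emb (i, t)) = F '' ({i} ×ˢ Circ2)

/-- A trivial link: all components bound disjoint embedded disks. -/
def IsTrivialLink {n : ℕ} (L : Link n) : Prop := SubTrivial L Set.univ

/-- The set of crossings at which the two diagrams `D`, `D'` (assumed to have
the same underlying projection) differ, i.e. where a crossing change has been
performed. -/
def diffCrossings {n : ℕ} (D D' : Diagram n) : Set R2 :=
  {x : R2 | ∃ u v : Fin n × S1, u ≠ v ∧ pr (D.emb u) = x ∧ pr (D.emb v) = x ∧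
    ht (D.emb u) < ht (D.emb v) ∧ ht (D'.emb v) < ht (D'.emb u)}

/-- The unknotting (unlinking) number `u(L)`: the minimal number of crossing
changes, over all diagrams of `L`, needed to turn `L` into a trivial link. -/
def unknottingNum {n : ℕ} (L : Link n) : ℕ :=
  sInf {m : ℕ | ∃ D D' : Diagram n, LinkEquiv D.toLink L ∧
    pr ∘ D'.emb = pr ∘ D.emb ∧ IsTrivialLink D'.toLink ∧
    (diffCrossings D D').ncard = m}

/-- The set of points of (the domain of) `L` at which the height function has
a local maximum. -/
def maxSet {n : ℕ} (L : Link n) : Set (Fin n × S1) :=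
  {u | IsLocalMax (fun w => ht (L.emb w)) u}

/-- The number of local maxima (counted as connected families) of the height
function on a given embedding. -/
def bridgeCount {n : ℕ} (L : Link n) : ℕ :=
  Nat.card (ConnectedComponents ↥(maxSet L))

/-- The bridge number `b(L)`: the minimal number of local maxima of the height
function over all embeddings of `L`. -/
def bridgeNum {n : ℕ} (L : Link n) : ℕ :=
  sInf {m : ℕ | ∃ G : Link n, LinkEquiv G L ∧
    Finite (ConnectedComponents ↥(maxSet G)) ∧ bridgeCount G = m}

/-- The `i`-th component of a link, as a knot. -/
def component {n : ℕ} (L : Link n) (i : Fin n) : Link 1 where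
  emb := fun p => L.emb (i, p.2)
  continuous := L.continuous.comp (continuous_const.prodMk continuous_snd)
  injective := by
    rintro ⟨a1, a2⟩ ⟨b1, b2⟩ hab
    have h := L.injective hab
    rw [Prod.mk.injEq] at h
    rw [Prod.mk.injEq]
    exact ⟨Subsingleton.elim _ _, h.2⟩
  polygonal := fun _ => L.polygonal i

/-- The 2-component sublink of `L` on the (distinct) components `i` and `j`. -/
def pairSub {n : ℕ} (L : Link n) (i j : Fin n) (hij : i ≠ j) : Link 2 where
  emb := fun p => L.emb (![i, j] p.1, p.2)
  continuous := L.continuous.comp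
    (((continuous_of_discreteTopology (f := fun k : Fin 2 => ![i, j] k)).comp
      continuous_fst).prodMk continuous_snd)
  injective := by
    rintro ⟨a1, a2⟩ ⟨b1, b2⟩ hab
    have h := L.injective hab
    rw [Prod.mk.injEq] at h
    rw [Prod.mk.injEq]
    refine ⟨?_, h.2⟩
    have h1 := h.1
    fin_cases a1 <;> fin_cases b1 <;> simp_all
  polygonal := by
    intro k
    fin_cases k
    · simpa using L.polygonal i
    · simpa using L.polygonal j

/-- An arc with endpoints `a` and `b`. -/
def IsArc (γ : Set R3) (a b : R3) : Prop :=
  ∃ f : ℝ → R3, ContinuousOn f (Icc (0:ℝ) 1) ∧ Set.InjOn f (Icc (0:ℝ) 1) ∧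
    f '' Icc (0:ℝ) 1 = γ ∧ f 0 = a ∧ f 1 = b

/-- `K` is a connected sum of the knots `K₁` and `K₂`: after an ambient
isotopy there is a round 2-sphere meeting `K` in exactly two points, and
capping off the two resulting arcs of `K` with an arc on the sphere produces
knots equivalent to `K₁` (inside) and `K₂` (outside). -/
def IsConnectedSum (K K₁ K₂ : Link 1) : Prop :=
  ∃ K' : Link 1, LinkEquiv K' K ∧
  ∃ (c : R3) (r : ℝ), 0 < r ∧ ∃ a b : R3, a ≠ b ∧
    Set.range K'.emb ∩ sphere c r = {a, b} ∧
    ∃ γ : Set R3, IsArc γ a b ∧ γ ⊆ sphere c r ∧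
      Carries K₁ ((Set.range K'.emb ∩ closedBall c r) ∪ γ) ∧
      Carries K₂ ((Set.range K'.emb \ ball c r) ∪ γ)

/-- `IsIterConnSum E m K` : `K` is a connected sum of `m` copies of the knot
`E` (the empty sum being the unknot). -/
inductive IsIterConnSum (E : Link 1) : ℕ → Link 1 → Prop
  | zero (K : Link 1) : IsTrivialLink K → IsIterConnSum E 0 K
  | succ (m : ℕ) (K' K : Link 1) : IsIterConnSum E m K' → IsConnectedSum K K' E →
      IsIterConnSum E (m + 1) K

/-- First strand of the twist region: one of the two strands of a double helix
with `m` half-twists. -/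
def helixA (m : ℤ) : Set R3 :=
  (fun t : ℝ => v3 (cos (π * m * t)) (sin (π * m * t)) (1 + t)) '' Icc 0 1

/-- Second strand of the twist region. -/
def helixB (m : ℤ) : Set R3 :=
  (fun t : ℝ => v3 (-cos (π * m * t)) (-sin (π * m * t)) (1 + t)) '' Icc 0 1

/-- The fold of the hairpin: a semicircle joining the bottoms of the two
helical strands. -/
def bottomArc : Set R3 := (fun θ : ℝ => v3 (cos θ) (sin θ) 1) '' Icc π (2 * π)

/-- The clasp: a polygonal arc joining the two top endpoints of the double
helix which passes once through the eye of the hairpin, clasping the fold. -/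
def capArc (m : ℤ) : Set R3 :=
  segment ℝ (v3 1 0 2) (v3 3 0 2) ∪
  segment ℝ (v3 3 0 2) (v3 3 0 (1/2)) ∪
  segment ℝ (v3 3 0 (1/2)) (v3 0 (-(1/2)) (1/2)) ∪
  segment ℝ (v3 0 (-(1/2)) (1/2)) (v3 0 (-(1/2)) (1 + 1/|(m : ℝ)|)) ∪
  segment ℝ (v3 0 (-(1/2)) (1 + 1/|(m : ℝ)|)) (v3 0 (-3) (1 + 1/|(m : ℝ)|)) ∪
  segment ℝ (v3 0 (-3) (1 + 1/|(m : ℝ)|)) (v3 0 (-3) 3) ∪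
  segment ℝ (v3 0 (-3) 3) (v3 (-1) 0 3) ∪
  segment ℝ (v3 (-1) 0 3) (v3 (-1) 0 2)

/-- The standard twist knot with `m` half-twists and a clasp: a hairpin with
`m` half-twists whose end is passed through its eye (`m = 1` gives the
trefoil, `m = 2` the figure-eight knot, then `5₂`, `6₁`, ...; negative `m`
gives the mirror images). -/
def twistSet (m : ℤ) : Set R3 := helixA m ∪ helixB m ∪ bottomArc ∪ capArc m

/-- `K` is a twist knot: a nontrivial knot obtained from a sequence of
half-twists by adding a clasp. -/
def IsTwistKnot (K : Link 1) : Prop :=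
  ¬ IsTrivialLink K ∧ ∃ m : ℤ, Carries K (twistSet m)

/-- The standard Hopf link: two round circles linked once. -/
def hopfSet : Set R3 :=
  (Set.range fun θ : ℝ => v3 (cos θ) (sin θ) 0) ∪
  (Set.range fun θ : ℝ => v3 (1 + cos θ) 0 (sin θ))

/-- `L` is a Hopf link. -/
def IsHopfLink (L : Link 2) : Prop := Carries L hopfSet

/-- The standard `(p,q)` curve on the torus of revolution: it winds `p` times
around the meridian and `q` times around the longitude. -/
def torusCurve (p q : ℕ) : Set R3 :=
  Set.range fun t : ℝ =>
    v3 (((2 : ℝ) + cos (2 * π * p * t)) * cos (2 * π * q * t))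
       (((2 : ℝ) + cos (2 * π * p * t)) * sin (2 * π * q * t))
       (sin (2 * π * p * t))

/-- `K` is the `(p,q)`-torus knot. -/
def IsTorusKnot (p q : ℕ) (K : Link 1) : Prop := Carries K (torusCurve p q)

/-- The components of `L` indexed by `S` are split from the remaining ones by
a round 2-sphere. -/
def SplitAt {n : ℕ} (L : Link n) (S : Set (Fin n)) : Prop :=
  ∃ (c : R3) (r : ℝ), 0 < r ∧
    (∀ i ∈ S, ∀ t : S1, L.emb (i, t) ∈ ball c r) ∧
    (∀ i ∉ S, ∀ t : S1, L.emb (i, t) ∉ closedBall c r)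

/-- `L` is completely splittable: its components can be separated by disjoint
embedded 2-spheres (equivalently, after an ambient isotopy they lie in
pairwise disjoint round balls). -/
def CompletelySplittable {n : ℕ} (L : Link n) : Prop :=
  ∃ L' : Link n, LinkEquiv L' L ∧ ∃ (c : Fin n → R3) (r : Fin n → ℝ),
    (∀ i, 0 < r i) ∧
    (Set.univ : Set (Fin n)).Pairwise
      (fun i j => Disjoint (closedBall (c i) (r i)) (closedBall (c j) (r j))) ∧
    ∀ (i : Fin n) (t : S1), L'.emb (i, t) ∈ ball (c i) (r i)

/-! ### Auxiliary material for Statement 0 -/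

section AscAux

/-- Points of `ℝ³` are determined by their projection and height. -/
lemma aux_eq_of_pr_ht {x y : R3} (h1 : pr x = pr y) (h2 : ht x = ht y) : x = y := by
  ext i
  have h0 := congrArg (· 0) h1
  have h1' := congrArg (· 1) h1
  simp [pr, v2] at h0 h1'
  fin_cases i
  · exact h0
  · exact h1'
  · exact h2

lemma aux_tOf_coe (r : ℝ) : tOf ↑r = Int.fract r := by
  have := AddCircle.coe_equivIco_mk_apply (p := (1:ℝ)) (hp := ⟨one_pos⟩) r
  simpa [tOf] using this

lemma aux_coe_tOf (t : S1) : ((tOf t : ℝ) : S1) = t :=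
  (AddCircle.equivIco 1 0).symm_apply_apply t

lemma aux_tOf_mem (t : S1) : tOf t ∈ Ico (0:ℝ) 1 := by
  have := (AddCircle.equivIco 1 0 t).2
  simpa [tOf] using this

lemma aux_tOf_inj : Function.Injective tOf := fun a b h => by
  rw [← aux_coe_tOf a, ← aux_coe_tOf b, h]

lemma aux_encBefore_one (u v : Fin 1 × S1) : encBefore u v ↔ tOf u.2 < tOf v.2 := by
  unfold encBefore
  have h1 : u.1 = v.1 := Subsingleton.elim _ _
  constructor
  · rintro (h | ⟨-, h⟩)
    · exact absurd h (by rw [h1]; exact lt_irrefl _)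
    · exact h
  · intro h; exact Or.inr ⟨h1, h⟩

lemma aux_encBefore_irrefl (u : Fin 1 × S1) : ¬ encBefore u u := by
  rw [aux_encBefore_one]; exact lt_irrefl _

/-- Reparametrization of a one-component link. -/
def reparamL (L : Link 1) (ρ : S1 ≃ S1) (hρ : Continuous ρ) : Link 1 where
  emb p := L.emb (p.1, ρ p.2)
  continuous := L.continuous.comp (continuous_fst.prodMk (hρ.comp continuous_snd))
  injective := by
    intro a b hab
    have h := L.injective hab
    rw [Prod.mk.injEq] at h
    exact Prod.ext h.1 (ρ.injective h.2)
  polygonal := by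
    intro i
    obtain ⟨F, hF⟩ := L.polygonal i
    refine ⟨F, ?_⟩
    rw [← hF]
    ext y
    constructor
    · rintro ⟨t, rfl⟩; exact ⟨ρ t, rfl⟩
    · rintro ⟨t, rfl⟩; exact ⟨ρ.symm t, by simp⟩

lemma reparamL_emb (L : Link 1) (ρ : S1 ≃ S1) (hρ : Continuous ρ) (p : Fin 1 × S1) :
    (reparamL L ρ hρ).emb p = L.emb (p.1, ρ p.2) := rfl

lemma range_reparamL (L : Link 1) (ρ : S1 ≃ S1) (hρ : Continuous ρ) :
    Set.range (reparamL L ρ hρ).emb = Set.range L.emb := by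
  ext y
  constructor
  · rintro ⟨p, rfl⟩; exact ⟨(p.1, ρ p.2), rfl⟩
  · rintro ⟨p, rfl⟩
    exact ⟨(p.1, ρ.symm p.2), by rw [reparamL_emb]; simp⟩

lemma doublePts_reparamL (L : Link 1) (ρ : S1 ≃ S1) (hρ : Continuous ρ) :
    doublePts (reparamL L ρ hρ) = doublePts L := by
  ext x
  constructor
  · rintro ⟨u, v, huv, hu, hv⟩
    refine ⟨(u.1, ρ u.2), (v.1, ρ v.2), ?_, hu, hv⟩
    intro h
    rw [Prod.mk.injEq] at h
    exact huv (Prod.ext h.1 (ρ.injective h.2))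
  · rintro ⟨u, v, huv, hu, hv⟩
    refine ⟨(u.1, ρ.symm u.2), (v.1, ρ.symm v.2), ?_, ?_, ?_⟩
    · intro h
      rw [Prod.mk.injEq] at h
      exact huv (Prod.ext h.1 (ρ.symm.injective h.2))
    · rw [reparamL_emb]; simpa using hu
    · rw [reparamL_emb]; simpa using hv

/-- Reparametrization of a one-component diagram; the new basepoint must not
lie over a crossing. -/
def reparamD (D : Diagram 1) (ρ : S1 ≃ S1) (hρ : Continuous ρ)
    (hb : pr (D.emb (0, ρ 0)) ∉ doublePts D.toLink) : Diagram 1 where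
  toLink := reparamL D.toLink ρ hρ
  finiteCrossings := by
    rw [doublePts_reparamL]; exact D.finiteCrossings
  doubleOnly := by
    intro x hx
    rw [doublePts_reparamL] at hx
    obtain ⟨u, v, huv, hu, hv, hw⟩ := D.doubleOnly x hx
    refine ⟨(u.1, ρ.symm u.2), (v.1, ρ.symm v.2), ?_, ?_, ?_, ?_⟩
    · intro h
      rw [Prod.mk.injEq] at h
      exact huv (Prod.ext h.1 (ρ.symm.injective h.2))
    · rw [reparamL_emb]; simpa using hu
    · rw [reparamL_emb]; simpa using hv
    · intro w hw'
      rw [reparamL_emb] at hw'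
      rcases hw (w.1, ρ w.2) hw' with h | h <;> rw [Prod.mk.injEq] at h
      · exact Or.inl (Prod.ext h.1 (by rw [← h.2]; simp))
      · exact Or.inr (Prod.ext h.1 (by rw [← h.2]; simp))
  baseFree := by
    intro i
    rw [doublePts_reparamL]
    have hi : i = (0 : Fin 1) := Subsingleton.elim _ _
    rw [reparamL_emb, hi]
    exact hb

lemma reparamD_emb (D : Diagram 1) (ρ : S1 ≃ S1) (hρ : Continuous ρ)
    (hb : pr (D.emb (0, ρ 0)) ∉ doublePts D.toLink) (p : Fin 1 × S1) :
    (reparamD D ρ hρ hb).emb p = D.emb (p.1, ρ p.2) := rfl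

lemma doublePts_reparamD (D : Diagram 1) (ρ : S1 ≃ S1) (hρ : Continuous ρ)
    (hb : pr (D.emb (0, ρ 0)) ∉ doublePts D.toLink) :
    doublePts (reparamD D ρ hρ hb).toLink = doublePts D.toLink :=
  doublePts_reparamL D.toLink ρ hρ

lemma linkEquiv_reparamD {K : Link 1} (D : Diagram 1) (ρ : S1 ≃ S1) (hρ : Continuous ρ)
    (hb : pr (D.emb (0, ρ 0)) ∉ doublePts D.toLink)
    (h : LinkEquiv D.toLink K) : LinkEquiv (reparamD D ρ hρ hb).toLink K := by
  obtain ⟨H, h1, h2, h3⟩ := h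
  exact ⟨H, h1, h2, by
    show H 1 '' Set.range (reparamL D.toLink ρ hρ).emb = _
    rw [range_reparamL]; exact h3⟩

lemma aux_asc_mem_doublePts {n : ℕ} {E : Diagram n} {x : R2} (h : AscendingAt E x) :
    x ∈ doublePts E.toLink := by
  obtain ⟨u, v, hu, hv, henc, -⟩ := h
  refine ⟨u, v, ?_, hu, hv⟩
  rintro rfl
  unfold encBefore at henc
  rcases henc with h | ⟨-, h⟩ <;> exact lt_irrefl _ h

/-- Characterization of ascending crossings in a reparametrized diagram. -/
lemma ascendingAt_reparamD {D : Diagram 1} {ρ : S1 ≃ S1} {hρ : Continuous ρ}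
    {hb : pr (D.emb (0, ρ 0)) ∉ doublePts D.toLink} {x : R2} {u v : Fin 1 × S1}
    (hu : pr (D.emb u) = x) (hv : pr (D.emb v) = x) (huv : u ≠ v)
    (hw : ∀ w, pr (D.emb w) = x → w = u ∨ w = v) :
    AscendingAt (reparamD D ρ hρ hb) x ↔
      ((tOf (ρ.symm u.2) < tOf (ρ.symm v.2) ∧ ht (D.emb u) < ht (D.emb v)) ∨
       (tOf (ρ.symm v.2) < tOf (ρ.symm u.2) ∧ ht (D.emb v) < ht (D.emb u))) := by
  constructor
  · rintro ⟨a, b, ha, hb', henc, hht⟩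
    simp only [reparamD_emb] at ha hb' hht
    rw [aux_encBefore_one] at henc
    rcases hw _ ha with h1 | h1 <;> rcases hw _ hb' with h2 | h2 <;>
        rw [Prod.mk.injEq] at h1 h2
    · exfalso
      have : a = b := Prod.ext (Subsingleton.elim _ _)
        (ρ.injective (h1.2.trans h2.2.symm))
      rw [this] at henc; exact lt_irrefl _ henc
    · left
      have ha2 : a.2 = ρ.symm u.2 := by rw [← h1.2]; simp
      have hb2 : b.2 = ρ.symm v.2 := by rw [← h2.2]; simp
      have heu : D.emb (a.1, ρ a.2) = D.emb u := by
        rw [show (a.1, ρ a.2) = u from Prod.ext h1.1 h1.2]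
      have hev : D.emb (b.1, ρ b.2) = D.emb v := by
        rw [show (b.1, ρ b.2) = v from Prod.ext h2.1 h2.2]
      rw [ha2, hb2] at henc
      rw [heu, hev] at hht
      exact ⟨henc, hht⟩
    · right
      have ha2 : a.2 = ρ.symm v.2 := by rw [← h1.2]; simp
      have hb2 : b.2 = ρ.symm u.2 := by rw [← h2.2]; simp
      have heu : D.emb (a.1, ρ a.2) = D.emb v := by
        rw [show (a.1, ρ a.2) = v from Prod.ext h1.1 h1.2]
      have hev : D.emb (b.1, ρ b.2) = D.emb u := by
        rw [show (b.1, ρ b.2) = u from Prod.ext h2.1 h2.2]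
      rw [ha2, hb2] at henc
      rw [heu, hev] at hht
      exact ⟨henc, hht⟩
    · exfalso
      have : a = b := Prod.ext (Subsingleton.elim _ _)
        (ρ.injective (h1.2.trans h2.2.symm))
      rw [this] at henc; exact lt_irrefl _ henc
  · have key : ∀ p q : Fin 1 × S1, pr (D.emb p) = x → pr (D.emb q) = x →
        tOf (ρ.symm p.2) < tOf (ρ.symm q.2) → ht (D.emb p) < ht (D.emb q) →
        AscendingAt (reparamD D ρ hρ hb) x := by
      intro p q hp hq ho hh
      refine ⟨(p.1, ρ.symm p.2), (q.1, ρ.symm q.2), ?_, ?_, ?_, ?_⟩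
      · rw [reparamD_emb]
        simpa using (by rw [show ((p.1 : Fin 1), p.2) = p from Prod.mk.eta]; exact hp :
          pr (D.emb (p.1, p.2)) = x)
      · rw [reparamD_emb]
        simpa using (by rw [show ((q.1 : Fin 1), q.2) = q from Prod.mk.eta]; exact hq :
          pr (D.emb (q.1, q.2)) = x)
      · rw [aux_encBefore_one]; exact ho
      · rw [reparamD_emb, reparamD_emb]
        simpa [Prod.mk.eta] using hh
    rintro (⟨ho, hh⟩ | ⟨ho, hh⟩)
    · exact key u v hu hv ho hh
    · exact key v u hv hu ho hh

/-! ### Real arithmetic for cyclic orders -/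

lemma aux_fract_of_lt {α s : ℝ} (h1 : s < α) (h2 : α - s < 1) :
    Int.fract (α - s) = α - s :=
  Int.fract_eq_self.2 ⟨by linarith, h2⟩

lemma aux_fract_of_gt {α s : ℝ} (h1 : α < s) (h2 : -1 < α - s) :
    Int.fract (α - s) = α - s + 1 := by
  have : Int.fract (α - s) = Int.fract (α - s + 1) := (Int.fract_add_one _).symm
  rw [this, Int.fract_eq_self.2 ⟨by linarith, by linarith⟩]

lemma aux_fract_flip {α s : ℝ} (hα : α ∈ Set.Ioo (0:ℝ) 1) (hs : s ∈ Set.Ioo (0:ℝ) 1)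
    (hne : α ≠ s) : Int.fract (s - α) = 1 - Int.fract (α - s) := by
  obtain ⟨hα0, hα1⟩ := hα
  obtain ⟨hs0, hs1⟩ := hs
  rcases hne.lt_or_gt with h | h
  · rw [aux_fract_of_lt h (by linarith), aux_fract_of_gt h (by linarith)]; ring
  · rw [aux_fract_of_gt h (by linarith), aux_fract_of_lt h (by linarith)]; ring

lemma aux_ord_unchanged {s s' α β : ℝ} (hα : α ∈ Set.Ioo (0:ℝ) 1) (hβ : β ∈ Set.Ioo (0:ℝ) 1)
    (hs : s ∈ Set.Ioo (0:ℝ) 1) (hs' : s' ∈ Set.Ioo (0:ℝ) 1) (hss : s < s')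
    (hαo : α < s ∨ s' < α) (hβo : β < s ∨ s' < β) :
    (Int.fract (α - s) < Int.fract (β - s) ↔ Int.fract (α - s') < Int.fract (β - s')) := by
  obtain ⟨hα0, hα1⟩ := hα
  obtain ⟨hβ0, hβ1⟩ := hβ
  obtain ⟨hs0, hs1⟩ := hs
  obtain ⟨hs'0, hs'1⟩ := hs'
  rcases hαo with h1 | h1 <;> rcases hβo with h2 | h2
  · rw [aux_fract_of_gt h1 (by linarith), aux_fract_of_gt h2 (by linarith),
      aux_fract_of_gt (by linarith : α < s') (by linarith),
      aux_fract_of_gt (by linarith : β < s') (by linarith)]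
    constructor <;> intro <;> linarith
  · rw [aux_fract_of_gt h1 (by linarith), aux_fract_of_lt (by linarith : s < β) (by linarith),
      aux_fract_of_gt (by linarith : α < s') (by linarith),
      aux_fract_of_lt h2 (by linarith)]
    constructor <;> intro <;> linarith
  · rw [aux_fract_of_lt (by linarith : s < α) (by linarith), aux_fract_of_gt h2 (by linarith),
      aux_fract_of_lt h1 (by linarith),
      aux_fract_of_gt (by linarith : β < s') (by linarith)]
    constructor <;> intro <;> linarith
  · rw [aux_fract_of_lt (by linarith : s < α) (by linarith),
      aux_fract_of_lt (by linarith : s < β) (by linarith),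
      aux_fract_of_lt h1 (by linarith), aux_fract_of_lt h2 (by linarith)]
    constructor <;> intro <;> linarith

lemma aux_ord_flip_at {s s' τ γ : ℝ} (hτ : τ ∈ Set.Ioo (0:ℝ) 1) (hγ : γ ∈ Set.Ioo (0:ℝ) 1)
    (hs : s ∈ Set.Ioo (0:ℝ) 1) (hs' : s' ∈ Set.Ioo (0:ℝ) 1)
    (h1 : s < τ) (h2 : τ < s') (hγo : γ < s ∨ s' < γ) :
    Int.fract (τ - s) < Int.fract (γ - s) ∧ Int.fract (γ - s') < Int.fract (τ - s') := by
  obtain ⟨hτ0, hτ1⟩ := hτ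
  obtain ⟨hγ0, hγ1⟩ := hγ
  obtain ⟨hs0, hs1⟩ := hs
  obtain ⟨hs'0, hs'1⟩ := hs'
  rcases hγo with h3 | h3
  · rw [aux_fract_of_lt h1 (by linarith), aux_fract_of_gt h3 (by linarith),
      aux_fract_of_gt (by linarith : τ < s') (by linarith),
      aux_fract_of_gt (by linarith : γ < s') (by linarith)]
    constructor <;> linarith
  · rw [aux_fract_of_lt h1 (by linarith), aux_fract_of_lt (by linarith : s < γ) (by linarith),
      aux_fract_of_gt (by linarith : τ < s') (by linarith),
      aux_fract_of_lt h3 (by linarith)]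
    constructor <;> linarith

lemma aux_status_flip {p q h1 h2 : ℝ} (hpq : p ≠ q) (hh : h1 ≠ h2) :
    ((q < p ∧ h1 < h2) ∨ (p < q ∧ h2 < h1)) ↔ ¬((p < q ∧ h1 < h2) ∨ (q < p ∧ h2 < h1)) := by
  rcases hpq.lt_or_gt with h | h <;> rcases hh.lt_or_gt with g | g <;>
    simp [h, g, lt_asymm h, lt_asymm g]

/-! ### The two reparametrizing equivalences -/

def shE (s : ℝ) : S1 ≃ S1 := ⟨fun t => t + ↑s, fun t => t - ↑s,
  fun t => add_sub_cancel_right t _, fun t => sub_add_cancel _ _⟩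

def flE (s : ℝ) : S1 ≃ S1 := ⟨fun t => ↑s - t, fun t => ↑s - t,
  fun t => sub_sub_cancel _ _, fun t => sub_sub_cancel _ _⟩

lemma shE_cont (s : ℝ) : Continuous (shE s) := continuous_id.add continuous_const
lemma flE_cont (s : ℝ) : Continuous (flE s) := continuous_const.sub continuous_id

lemma shE_zero (s : ℝ) : shE s 0 = ((s : ℝ) : S1) := by
  show (0 : S1) + ↑s = _; rw [zero_add]

lemma flE_zero (s : ℝ) : flE s 0 = ((s : ℝ) : S1) := by
  show ((s : ℝ) : S1) - 0 = _; rw [sub_zero]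

lemma tOf_shE_symm (s α : ℝ) : tOf ((shE s).symm ↑α) = Int.fract (α - s) := by
  show tOf (((α : ℝ) : S1) - ((s : ℝ) : S1)) = _
  rw [show ((α : ℝ) : S1) - ((s : ℝ) : S1) = ((α - s : ℝ) : S1) by norm_cast]
  exact aux_tOf_coe _

lemma tOf_flE_symm (s α : ℝ) : tOf ((flE s).symm ↑α) = Int.fract (s - α) := by
  show tOf (((s : ℝ) : S1) - ((α : ℝ) : S1)) = _
  rw [show ((s : ℝ) : S1) - ((α : ℝ) : S1) = ((s - α : ℝ) : S1) by norm_cast]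
  exact aux_tOf_coe _

end AscAux

section AscMain

lemma aux_fract_ne {α β s : ℝ} (hα : α ∈ Set.Ioo (0:ℝ) 1) (hβ : β ∈ Set.Ioo (0:ℝ) 1)
    (hαβ : α ≠ β) : Int.fract (α - s) ≠ Int.fract (β - s) := by
  intro h
  rw [Int.fract_eq_fract] at h
  obtain ⟨z, hz⟩ := h
  have hzval : (z : ℝ) = α - β := by rw [← hz]; ring
  have h1 : (z : ℝ) < 1 := by rw [hzval]; linarith [hα.2, hβ.1]
  have h2 : (-1 : ℝ) < z := by rw [hzval]; linarith [hα.1, hβ.2]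
  have hz0 : z = 0 := by
    have h1' : z < 1 := by exact_mod_cast h1
    have h2' : -1 < z := by exact_mod_cast h2
    omega
  rw [hz0] at hzval
  apply hαβ
  push_cast at hzval
  linarith

lemma aux_main {K : Link 1} {D : Diagram 1} (hDK : LinkEquiv D.toLink K)
    (hpos : (doublePts D.toLink).ncard ≠ 0) :
    2 * ascNum K + 1 ≤ (doublePts D.toLink).ncard := by
  classical
  have hPfin : (doublePts D.toLink).Finite := D.finiteCrossings
  have hPne : (doublePts D.toLink).Nonempty := Set.nonempty_of_ncard_ne_zero hpos
  -- the finite set of passage times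
  set W : Set (Fin 1 × S1) := {w | pr (D.emb w) ∈ doublePts D.toLink} with hWdef
  have hWfin : W.Finite := by
    have hsub : W ⊆ ⋃ x ∈ doublePts D.toLink, {w : Fin 1 × S1 | pr (D.emb w) = x} :=
      fun w hw => Set.mem_biUnion hw rfl
    refine Set.Finite.subset (Set.Finite.biUnion hPfin ?_) hsub
    intro x hx
    obtain ⟨u, v, -, -, -, hw⟩ := D.doubleOnly x hx
    refine Set.Finite.subset ((Set.finite_singleton v).insert u) ?_
    intro w hw'
    rcases hw w hw' with h | h
    · exact Set.mem_insert_iff.2 (Or.inl h)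
    · exact Set.mem_insert_iff.2 (Or.inr (by simpa using h))
  set T : Set ℝ := (fun w : Fin 1 × S1 => tOf w.2) '' W with hTdef
  have hTfin : T.Finite := hWfin.image _
  have hTmem : ∀ τ ∈ T, τ ∈ Set.Ioo (0:ℝ) 1 := by
    rintro τ ⟨w, hw, rfl⟩
    show tOf w.2 ∈ Set.Ioo (0:ℝ) 1
    have h01 := aux_tOf_mem w.2
    refine ⟨lt_of_le_of_ne h01.1 ?_, h01.2⟩
    intro h0
    have hw2 : w.2 = ((0:ℝ) : S1) := by rw [← aux_coe_tOf w.2, ← h0]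
    have hw0 : w = ((0 : Fin 1), (0 : S1)) :=
      Prod.ext (Subsingleton.elim _ _) (by rw [hw2]; norm_cast)
    have hmem : pr (D.emb w) ∈ doublePts D.toLink := hw
    rw [hw0] at hmem
    exact D.baseFree 0 hmem
  have hfree : ∀ r : ℝ, r ∈ Set.Ico (0:ℝ) 1 → r ∉ T →
      pr (D.emb (0, ((r:ℝ):S1))) ∉ doublePts D.toLink := by
    intro r hr hrT hmem
    refine hrT ⟨((0:Fin 1), ((r:ℝ):S1)), hmem, ?_⟩
    show tOf ((r:ℝ):S1) = r
    rw [aux_tOf_coe]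
    exact Int.fract_eq_self.2 ⟨hr.1, hr.2⟩
  have hTne : T.Nonempty := by
    obtain ⟨x, hx⟩ := hPne
    have hx2 := hx
    obtain ⟨u, v, -, hu, -⟩ := hx2
    refine ⟨tOf u.2, ⟨u, ?_, rfl⟩⟩
    rw [hWdef]
    simp only [Set.mem_setOf_eq, hu]
    exact ‹x ∈ doublePts D.toLink›
  -- choose τ, s, s'
  set Tf := hTfin.toFinset with hTfdef
  have hTfne : Tf.Nonempty := by
    obtain ⟨τ, hτ⟩ := hTne; exact ⟨τ, hTfin.mem_toFinset.2 hτ⟩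
  set τ := Tf.min' hTfne with hτdef
  have hτT : τ ∈ T := hTfin.mem_toFinset.1 (Tf.min'_mem hTfne)
  have hτmin : ∀ α ∈ T, τ ≤ α := fun α hα => Tf.min'_le α (hTfin.mem_toFinset.2 hα)
  have hτIoo := hTmem τ hτT
  set s := τ / 2 with hsdef
  have hsIoo : s ∈ Set.Ioo (0:ℝ) 1 := ⟨by linarith [hτIoo.1], by linarith [hτIoo.1, hτIoo.2]⟩
  have hsτ : s < τ := by
    have := hτIoo.1; rw [hsdef]; linarith
  obtain ⟨s', hs'Ioo, hτs', hs'gap⟩ :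
      ∃ s', s' ∈ Set.Ioo (0:ℝ) 1 ∧ τ < s' ∧ ∀ α ∈ T, α ≠ τ → s' < α := by
    by_cases hU : (Tf.filter (fun a => τ < a)).Nonempty
    · set m := (Tf.filter (fun a => τ < a)).min' hU with hmdef
      have hmmem := (Tf.filter (fun a => τ < a)).min'_mem hU
      have hmT : m ∈ T := hTfin.mem_toFinset.1 (Finset.mem_filter.1 hmmem).1
      have hτm : τ < m := (Finset.mem_filter.1 hmmem).2
      have hm1 : m < 1 := (hTmem m hmT).2
      refine ⟨(τ + m)/2, ⟨by linarith [hτIoo.1], by linarith⟩, by linarith, ?_⟩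
      intro α hα hατ
      have h1 : τ < α := lt_of_le_of_ne (hτmin α hα) (Ne.symm hατ)
      have h2 : m ≤ α := (Tf.filter (fun a => τ < a)).min'_le α
        (Finset.mem_filter.2 ⟨hTfin.mem_toFinset.2 hα, h1⟩)
      linarith
    · refine ⟨(τ + 1)/2, ⟨by linarith [hτIoo.1], by linarith [hτIoo.2]⟩,
        by linarith [hτIoo.2], ?_⟩
      intro α hα hατ
      exfalso
      exact hU ⟨α, Finset.mem_filter.2 ⟨hTfin.mem_toFinset.2 hα,
        lt_of_le_of_ne (hτmin α hα) (Ne.symm hατ)⟩⟩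
  have hss' : s < s' := lt_trans hsτ hτs'
  have hsT : s ∉ T := fun h => absurd (hτmin s h) (by linarith)
  have hs'T : s' ∉ T := by
    intro h
    rcases eq_or_ne s' τ with h' | h'
    · rw [h'] at hτs'; exact lt_irrefl _ hτs'
    · exact lt_irrefl s' (hs'gap s' h h')
  have hout : ∀ α ∈ T, α ≠ τ → (α < s ∨ s' < α) := fun α hα h => Or.inr (hs'gap α hα h)
  -- the distinguished crossing
  obtain ⟨w₀, hw₀W, hw₀τ⟩ := hτT
  replace hw₀τ : tOf w₀.2 = τ := hw₀τ
  set x₀ := pr (D.emb w₀) with hx₀def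
  have hx₀P : x₀ ∈ doublePts D.toLink := hw₀W
  -- the four diagrams
  have hb1 : pr (D.emb (0, shE s 0)) ∉ doublePts D.toLink := by
    rw [shE_zero]; exact hfree s ⟨le_of_lt hsIoo.1, hsIoo.2⟩ hsT
  have hb2 : pr (D.emb (0, flE s 0)) ∉ doublePts D.toLink := by
    rw [flE_zero]; exact hfree s ⟨le_of_lt hsIoo.1, hsIoo.2⟩ hsT
  have hb3 : pr (D.emb (0, shE s' 0)) ∉ doublePts D.toLink := by
    rw [shE_zero]; exact hfree s' ⟨le_of_lt hs'Ioo.1, hs'Ioo.2⟩ hs'T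
  have hb4 : pr (D.emb (0, flE s' 0)) ∉ doublePts D.toLink := by
    rw [flE_zero]; exact hfree s' ⟨le_of_lt hs'Ioo.1, hs'Ioo.2⟩ hs'T
  set A1 := {x : R2 | AscendingAt (reparamD D (shE s) (shE_cont s) hb1) x} with hA1def
  set A2 := {x : R2 | AscendingAt (reparamD D (flE s) (flE_cont s) hb2) x} with hA2def
  set A3 := {x : R2 | AscendingAt (reparamD D (shE s') (shE_cont s') hb3) x} with hA3def
  set A4 := {x : R2 | AscendingAt (reparamD D (flE s') (flE_cont s') hb4) x} with hA4def
  -- the key pointwise facts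
  have key : ∀ x ∈ doublePts D.toLink,
      ((x ∈ A2 ↔ x ∉ A1) ∧ (x ∈ A4 ↔ x ∉ A3)) ∧
      ((x ≠ x₀ → (x ∈ A3 ↔ x ∈ A1)) ∧ (x = x₀ → (x ∈ A3 ↔ x ∉ A1))) := by
    intro x hx
    obtain ⟨u, v, huv, hu, hv, hw⟩ := D.doubleOnly x hx
    have huW : u ∈ W := by
      rw [hWdef]; simp only [Set.mem_setOf_eq, hu]; exact hx
    have hvW : v ∈ W := by
      rw [hWdef]; simp only [Set.mem_setOf_eq, hv]; exact hx
    have hαT : tOf u.2 ∈ T := ⟨u, huW, rfl⟩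
    have hβT : tOf v.2 ∈ T := ⟨v, hvW, rfl⟩
    set α := tOf u.2 with hαdef
    set β := tOf v.2 with hβdef
    have hαIoo := hTmem α hαT
    have hβIoo := hTmem β hβT
    have hu2 : u.2 = ((α : ℝ) : S1) := (aux_coe_tOf u.2).symm
    have hv2 : v.2 = ((β : ℝ) : S1) := (aux_coe_tOf v.2).symm
    have hαβ : α ≠ β := by
      intro h
      exact huv (Prod.ext (Subsingleton.elim _ _) (aux_tOf_inj h))
    have hhne : ht (D.emb u) ≠ ht (D.emb v) := by
      intro h
      exact huv (D.injective (aux_eq_of_pr_ht (hu.trans hv.symm) h))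
    have hαs : α ≠ s := fun h => hsT (h ▸ hαT)
    have hβs : β ≠ s := fun h => hsT (h ▸ hβT)
    have hαs' : α ≠ s' := fun h => hs'T (h ▸ hαT)
    have hβs' : β ≠ s' := fun h => hs'T (h ▸ hβT)
    have hfne : Int.fract (α - s) ≠ Int.fract (β - s) := aux_fract_ne hαIoo hβIoo hαβ
    have hfne' : Int.fract (α - s') ≠ Int.fract (β - s') := aux_fract_ne hαIoo hβIoo hαβ
    have m1 : x ∈ A1 ↔ ((Int.fract (α - s) < Int.fract (β - s) ∧ ht (D.emb u) < ht (D.emb v)) ∨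
        (Int.fract (β - s) < Int.fract (α - s) ∧ ht (D.emb v) < ht (D.emb u))) := by
      show AscendingAt (reparamD D (shE s) (shE_cont s) hb1) x ↔ _
      rw [ascendingAt_reparamD hu hv huv hw, hu2, hv2, tOf_shE_symm, tOf_shE_symm]
    have m3 : x ∈ A3 ↔ ((Int.fract (α - s') < Int.fract (β - s') ∧ ht (D.emb u) < ht (D.emb v)) ∨
        (Int.fract (β - s') < Int.fract (α - s') ∧ ht (D.emb v) < ht (D.emb u))) := by
      show AscendingAt (reparamD D (shE s') (shE_cont s') hb3) x ↔ _
      rw [ascendingAt_reparamD hu hv huv hw, hu2, hv2, tOf_shE_symm, tOf_shE_symm]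
    have m2 : x ∈ A2 ↔ ((Int.fract (β - s) < Int.fract (α - s) ∧ ht (D.emb u) < ht (D.emb v)) ∨
        (Int.fract (α - s) < Int.fract (β - s) ∧ ht (D.emb v) < ht (D.emb u))) := by
      show AscendingAt (reparamD D (flE s) (flE_cont s) hb2) x ↔ _
      rw [ascendingAt_reparamD hu hv huv hw, hu2, hv2, tOf_flE_symm, tOf_flE_symm,
        aux_fract_flip hαIoo hsIoo hαs, aux_fract_flip hβIoo hsIoo hβs]
      constructor
      · rintro (⟨h, hh⟩ | ⟨h, hh⟩)
        · exact Or.inl ⟨by linarith, hh⟩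
        · exact Or.inr ⟨by linarith, hh⟩
      · rintro (⟨h, hh⟩ | ⟨h, hh⟩)
        · exact Or.inl ⟨by linarith, hh⟩
        · exact Or.inr ⟨by linarith, hh⟩
    have m4 : x ∈ A4 ↔ ((Int.fract (β - s') < Int.fract (α - s') ∧ ht (D.emb u) < ht (D.emb v)) ∨
        (Int.fract (α - s') < Int.fract (β - s') ∧ ht (D.emb v) < ht (D.emb u))) := by
      show AscendingAt (reparamD D (flE s') (flE_cont s') hb4) x ↔ _
      rw [ascendingAt_reparamD hu hv huv hw, hu2, hv2, tOf_flE_symm, tOf_flE_symm,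
        aux_fract_flip hαIoo hs'Ioo hαs', aux_fract_flip hβIoo hs'Ioo hβs']
      constructor
      · rintro (⟨h, hh⟩ | ⟨h, hh⟩)
        · exact Or.inl ⟨by linarith, hh⟩
        · exact Or.inr ⟨by linarith, hh⟩
      · rintro (⟨h, hh⟩ | ⟨h, hh⟩)
        · exact Or.inl ⟨by linarith, hh⟩
        · exact Or.inr ⟨by linarith, hh⟩
    refine ⟨⟨?_, ?_⟩, ?_, ?_⟩
    · rw [m2, m1]; exact aux_status_flip hfne hhne
    · rw [m4, m3]; exact aux_status_flip hfne' hhne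
    · intro hne
      have hατ : α ≠ τ := by
        intro h
        apply hne
        have huw : u = w₀ := Prod.ext (Subsingleton.elim _ _)
          (aux_tOf_inj (by rw [← hαdef, h, ← hw₀τ]))
        rw [← hu, huw, hx₀def]
      have hβτ : β ≠ τ := by
        intro h
        apply hne
        have hvw : v = w₀ := Prod.ext (Subsingleton.elim _ _)
          (aux_tOf_inj (by rw [← hβdef, h, ← hw₀τ]))
        rw [← hv, hvw, hx₀def]
      have o1 := aux_ord_unchanged hαIoo hβIoo hsIoo hs'Ioo hss' (hout α hαT hατ) (hout β hβT hβτ)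
      have o2 := aux_ord_unchanged hβIoo hαIoo hsIoo hs'Ioo hss' (hout β hβT hβτ) (hout α hαT hατ)
      rw [m3, m1, ← o1, ← o2]
    · intro heq
      have hww : w₀ = u ∨ w₀ = v := hw w₀ (by rw [heq, hx₀def])
      rcases hww with h | h
      · have hτα : τ = α := by rw [← hw₀τ, h, ← hαdef]
        have hβτ : β ≠ τ := fun hh => hαβ (by rw [hτα] at hh; exact hh.symm)
        obtain ⟨of1, of2⟩ := aux_ord_flip_at hαIoo hβIoo hsIoo hs'Ioo
          (hτα ▸ hsτ) (hτα ▸ hτs') (hout β hβT hβτ)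
        rw [m3, m1]
        rcases hhne.lt_or_gt with g | g <;>
          simp [of1, of2, lt_asymm of1, lt_asymm of2, g, lt_asymm g]
      · have hτβ : τ = β := by rw [← hw₀τ, h, ← hβdef]
        have hατ : α ≠ τ := fun hh => hαβ (by rw [hτβ] at hh; exact hh)
        obtain ⟨of1, of2⟩ := aux_ord_flip_at hβIoo hαIoo hsIoo hs'Ioo
          (hτβ ▸ hsτ) (hτβ ▸ hτs') (hout α hαT hατ)
        rw [m3, m1]
        rcases hhne.lt_or_gt with g | g <;>
          simp [of1, of2, lt_asymm of1, lt_asymm of2, g, lt_asymm g]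
  -- counting
  have hdp1 : doublePts (reparamD D (shE s) (shE_cont s) hb1).toLink = doublePts D.toLink :=
    doublePts_reparamD D _ _ _
  have hdp2 : doublePts (reparamD D (flE s) (flE_cont s) hb2).toLink = doublePts D.toLink :=
    doublePts_reparamD D _ _ _
  have hdp3 : doublePts (reparamD D (shE s') (shE_cont s') hb3).toLink = doublePts D.toLink :=
    doublePts_reparamD D _ _ _
  have hdp4 : doublePts (reparamD D (flE s') (flE_cont s') hb4).toLink = doublePts D.toLink :=
    doublePts_reparamD D _ _ _
  have hA1P : A1 ⊆ doublePts D.toLink := by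
    intro x hx
    have := aux_asc_mem_doublePts hx
    rwa [hdp1] at this
  have hA3P : A3 ⊆ doublePts D.toLink := by
    intro x hx
    have := aux_asc_mem_doublePts hx
    rwa [hdp3] at this
  have hA1fin : A1.Finite := hPfin.subset hA1P
  have hA3fin : A3.Finite := hPfin.subset hA3P
  have hA2eq : A2 = doublePts D.toLink \ A1 := by
    ext x
    constructor
    · intro hx
      have hxP : x ∈ doublePts D.toLink := by
        have := aux_asc_mem_doublePts hx
        rwa [hdp2] at this
      exact ⟨hxP, ((key x hxP).1.1).1 hx⟩
    · rintro ⟨hxP, hxn⟩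
      exact ((key x hxP).1.1).2 hxn
  have hA4eq : A4 = doublePts D.toLink \ A3 := by
    ext x
    constructor
    · intro hx
      have hxP : x ∈ doublePts D.toLink := by
        have := aux_asc_mem_doublePts hx
        rwa [hdp4] at this
      exact ⟨hxP, ((key x hxP).1.2).1 hx⟩
    · rintro ⟨hxP, hxn⟩
      exact ((key x hxP).1.2).2 hxn
  have hA3card : (x₀ ∈ A1 ∧ A3.ncard = A1.ncard - 1 ∧ 1 ≤ A1.ncard) ∨
      (x₀ ∉ A1 ∧ A3.ncard = A1.ncard + 1) := by
    by_cases h0 : x₀ ∈ A1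
    · left
      refine ⟨h0, ?_, (Set.ncard_pos hA1fin).2 ⟨x₀, h0⟩⟩
      have hEq : A3 = A1 \ {x₀} := by
        ext x
        by_cases hx : x = x₀
        · subst hx
          simp only [Set.mem_diff, Set.mem_singleton_iff, not_true, and_false, iff_false]
          intro h
          exact (((key x₀ hx₀P).2.2) rfl).1 h h0
        · constructor
          · intro h
            have hxP : x ∈ doublePts D.toLink := hA3P h
            exact ⟨((key x hxP).2.1 hx).1 h, by simp [hx]⟩
          · rintro ⟨h, -⟩
            have hxP : x ∈ doublePts D.toLink := hA1P h
            exact ((key x hxP).2.1 hx).2 h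
      rw [hEq]
      exact Set.ncard_diff_singleton_of_mem h0
    · right
      refine ⟨h0, ?_⟩
      have hEq : A3 = insert x₀ A1 := by
        ext x
        by_cases hx : x = x₀
        · subst hx
          simp only [Set.mem_insert_iff, true_or, iff_true]
          exact (((key x₀ hx₀P).2.2) rfl).2 h0
        · rw [Set.mem_insert_iff]
          constructor
          · intro h
            have hxP : x ∈ doublePts D.toLink := hA3P h
            exact Or.inr (((key x hxP).2.1 hx).1 h)
          · rintro (h | h)
            · exact absurd h hx
            · have hxP : x ∈ doublePts D.toLink := hA1P h
              exact ((key x hxP).2.1 hx).2 h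
      rw [hEq]
      exact Set.ncard_insert_of_notMem h0 hA1fin
  have hn2 : A2.ncard = (doublePts D.toLink).ncard - A1.ncard := by
    rw [hA2eq]
    exact Set.ncard_diff hA1P hA1fin
  have hn4 : A4.ncard = (doublePts D.toLink).ncard - A3.ncard := by
    rw [hA4eq]
    exact Set.ncard_diff hA3P hA3fin
  have hv1le : A1.ncard ≤ (doublePts D.toLink).ncard := Set.ncard_le_ncard hA1P hPfin
  have hv3le : A3.ncard ≤ (doublePts D.toLink).ncard := Set.ncard_le_ncard hA3P hPfin
  -- the ascending number is below each of the four counts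
  have hle1 : ascNum K ≤ A1.ncard :=
    Nat.sInf_le ⟨reparamD D (shE s) (shE_cont s) hb1,
      linkEquiv_reparamD D (shE s) (shE_cont s) hb1 hDK, rfl⟩
  have hle2 : ascNum K ≤ A2.ncard :=
    Nat.sInf_le ⟨reparamD D (flE s) (flE_cont s) hb2,
      linkEquiv_reparamD D (flE s) (flE_cont s) hb2 hDK, rfl⟩
  have hle3 : ascNum K ≤ A3.ncard :=
    Nat.sInf_le ⟨reparamD D (shE s') (shE_cont s') hb3,
      linkEquiv_reparamD D (shE s') (shE_cont s') hb3 hDK, rfl⟩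
  have hle4 : ascNum K ≤ A4.ncard :=
    Nat.sInf_le ⟨reparamD D (flE s') (flE_cont s') hb4,
      linkEquiv_reparamD D (flE s') (flE_cont s') hb4 hDK, rfl⟩
  rw [hn2] at hle2
  rw [hn4] at hle4
  rcases hA3card with ⟨-, h3, h1pos⟩ | ⟨-, h3⟩ <;> omega

end AscMain

/-- For any nontrivial knot `K`, the ascending number satisfies
`a(K) ≤ ⌊(c(K) − 1)/2⌋`, where `c(K)` is the minimal crossing number. -/
theorem ascending_le_half_crossing_sub_one_of_nontrivial (K : Link 1)
    (hK : ¬ IsTrivialLink K) :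
    ascNum K ≤ (crossingNum K - 1) / 2 := by
  classical
  by_cases hCne : {m : ℕ | ∃ D : Diagram 1, LinkEquiv D.toLink K ∧
      (doublePts D.toLink).ncard = m}.Nonempty
  · have hm := Nat.sInf_mem hCne
    obtain ⟨D, hDK, hc⟩ := hm
    have hcK : (doublePts D.toLink).ncard = crossingNum K := hc
    rcases eq_or_ne ((doublePts D.toLink).ncard) 0 with h0 | hne
    · have hPempty : doublePts D.toLink = ∅ :=
        (Set.ncard_eq_zero D.finiteCrossings).1 h0
      have hA : {x : R2 | AscendingAt D x} = ∅ := by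
        apply Set.eq_empty_iff_forall_notMem.2
        intro x hx
        have := aux_asc_mem_doublePts hx
        rw [hPempty] at this
        exact this
      have hd0 : diagAsc D = 0 := by unfold diagAsc; rw [hA]; simp
      have hle : ascNum K ≤ 0 := by
        unfold ascNum; exact Nat.sInf_le ⟨D, hDK, hd0⟩
      omega
    · have h := aux_main hDK hne
      rw [hcK] at h
      omega
  · have hcr : crossingNum K = 0 := by
      unfold crossingNum
      rw [Set.not_nonempty_iff_eq_empty.1 hCne, Nat.sInf_empty]
    have hasc : ascNum K = 0 := by
      unfold ascNum
      have hS : {m : ℕ | ∃ D : Diagram 1, LinkEquiv D.toLink K ∧ diagAsc D = m} = ∅ := by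
        apply Set.eq_empty_iff_forall_notMem.2
        rintro m ⟨D, hD, -⟩
        exact hCne ⟨(doublePts D.toLink).ncard, D, hD, rfl⟩
      rw [hS, Nat.sInf_empty]
    rw [hcr, hasc]

end
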